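/- Let n ∈ ℕ, ν₁,…,νₙ > 0, let K be a strictly concave monotone kernel function, and let J be an upper semicontinuous n-field function. Let x, y be regular node systems (all interval maxima mⱼ finite) with xᵢ ≤ yᵢ for all i = 1,…,n and x ≠ y. Then m₀(x) < m₀(y) and mₙ(x) > mₙ(y); in particular intertwining of maxima holds for x and y. -/

import Mathlib

open Set

noncomputable section

/-- A kernel function: `[-1,1] → ℝ ∪ {-∞}`, real-valued and concave on `(-1,0)` and on `(0,1)`,
extended continuously (in `EReal`) to the closed subintervals, so that the endpoint values
(in particular `K 0`) are the one-sided limits. -/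
def KernelFun (K : ℝ → EReal) : Prop :=
  (∀ t, K t ≠ ⊤) ∧
  (∀ t ∈ Ioo (-1:ℝ) 0 ∪ Ioo (0:ℝ) 1, K t ≠ ⊥) ∧
  ConcaveOn ℝ (Ioo (-1:ℝ) 0) (fun t => (K t).toReal) ∧
  ConcaveOn ℝ (Ioo (0:ℝ) 1) (fun t => (K t).toReal) ∧
  ContinuousOn K (Icc (-1:ℝ) 0) ∧
  ContinuousOn K (Icc (0:ℝ) 1)

/-- Monotonicity condition (M): nonincreasing on `(-1,0)`, nondecreasing on `(0,1)`. -/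
def KMonotone (K : ℝ → EReal) : Prop :=
  AntitoneOn K (Ioo (-1:ℝ) 0) ∧ MonotoneOn K (Ioo (0:ℝ) 1)

/-- Strict monotonicity (SM): strictly decreasing on `[-1,0)`, strictly increasing on `(0,1]`. -/
def KStrictMonotone (K : ℝ → EReal) : Prop :=
  StrictAntiOn K (Ico (-1:ℝ) 0) ∧ StrictMonoOn K (Ioc (0:ℝ) 1)

/-- Strict concavity on both `(-1,0)` and `(0,1)`. -/
def KStrictConcave (K : ℝ → EReal) : Prop :=
  StrictConcaveOn ℝ (Ioo (-1:ℝ) 0) (fun t => (K t).toReal) ∧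
  StrictConcaveOn ℝ (Ioo (0:ℝ) 1) (fun t => (K t).toReal)

/-- An `n`-field function: bounded above on `[0,1]`, never `+∞`, and finite at more than `n`
points of `[0,1]`, counting the endpoints `0`, `1` with weight `1/2` only. -/
def NFieldFun (n : ℕ) (J : ℝ → EReal) : Prop :=
  (∀ t, J t ≠ ⊤) ∧
  (∃ M : ℝ, ∀ t ∈ Icc (0:ℝ) 1, J t ≤ (M : EReal)) ∧
  ((∃ S : Finset ℝ, ↑S ⊆ {t ∈ Ioo (0:ℝ) 1 | J t ≠ ⊥} ∧ n + 1 ≤ S.card) ∨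
   ((∃ S : Finset ℝ, ↑S ⊆ {t ∈ Ioo (0:ℝ) 1 | J t ≠ ⊥} ∧ n ≤ S.card) ∧
     (J 0 ≠ ⊥ ∨ J 1 ≠ ⊥)))

/-- The closed simplex: `0 ≤ x₁ ≤ ⋯ ≤ xₙ ≤ 1`. -/
def closedSimplex (n : ℕ) (x : Fin n → ℝ) : Prop :=
  (∀ i, x i ∈ Icc (0:ℝ) 1) ∧ Monotone x

/-- The open simplex: `0 < x₁ < ⋯ < xₙ < 1`. -/
def openSimplex (n : ℕ) (x : Fin n → ℝ) : Prop :=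
  (∀ i, x i ∈ Ioo (0:ℝ) 1) ∧ StrictMono x

/-- Extended node system: `x₀ = 0`, `x₁,…,xₙ`, `x_{n+1} = 1`. -/
def extNodes (n : ℕ) (x : Fin n → ℝ) : Fin (n + 2) → ℝ :=
  Fin.cons 0 (Fin.snoc x 1)

/-- The (weighted) sum of translates function `F(x,t) = J(t) + ∑ νⱼ K(t - xⱼ)`. -/
def sumTrans (n : ℕ) (ν : Fin n → ℝ) (K J : ℝ → EReal) (x : Fin n → ℝ) (t : ℝ) : EReal :=
  J t + ∑ i, (ν i : EReal) * K (t - x i)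

/-- The `j`-th interval maximum `mⱼ(x) = sup_{[xⱼ, xⱼ₊₁]} F(x,·)`. -/
def intMax (n : ℕ) (ν : Fin n → ℝ) (K J : ℝ → EReal) (x : Fin n → ℝ) (j : Fin (n + 1)) :
    EReal :=
  sSup (sumTrans n ν K J x '' Icc (extNodes n x j.castSucc) (extNodes n x j.succ))

/-- A node system is regular (nonsingular) if all interval maxima are finite. -/
def regularNodes (n : ℕ) (ν : Fin n → ℝ) (K J : ℝ → EReal) (x : Fin n → ℝ) : Prop :=
  ∀ j, intMax n ν K J x j ≠ ⊥


section Helpers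

/-- An upper semicontinuous `EReal`-valued function attains its maximum on a compact set. -/
lemma usc_exists_max {f : ℝ → EReal} {s : Set ℝ} (hs : IsCompact s) (hne : s.Nonempty)
    (hf : UpperSemicontinuousOn f s) : ∃ a ∈ s, ∀ z ∈ s, f z ≤ f a := by
  by_contra h
  push_neg at h
  choose w hw hfw using h
  have hU : ∀ (t : ℝ) (ht : t ∈ s), ∃ O : Set ℝ, IsOpen O ∧ t ∈ O ∧
      ∀ z ∈ O ∩ s, f z < f (w t ht) := by
    intro t ht
    have := hf t ht (f (w t ht)) (hfw t ht)
    rw [eventually_nhdsWithin_iff] at this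
    rcases eventually_nhds_iff.1 this with ⟨O, hO1, hO2, hO3⟩
    exact ⟨O, hO2, hO3, fun z hz => hO1 z hz.1 hz.2⟩
  choose O hOopen hOmem hOlt using hU
  obtain ⟨T, hT⟩ := hs.elim_nhds_subcover' O (fun t ht => (hOopen t ht).mem_nhds (hOmem t ht))
  have hTne : T.Nonempty := by
    rcases hne with ⟨z, hz⟩
    rcases mem_iUnion₂.1 (hT hz) with ⟨t, ht, _⟩
    exact ⟨t, ht⟩
  obtain ⟨b, hbT, hb⟩ := T.exists_max_image (fun t => f (w t.1 t.2)) hTne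
  have : f (w b.1 b.2) < f (w b.1 b.2) := by
    have hwb : w b.1 b.2 ∈ s := hw b.1 b.2
    rcases mem_iUnion₂.1 (hT hwb) with ⟨t, ht, hmem⟩
    exact lt_of_lt_of_le (hOlt t.1 t.2 _ ⟨hmem, hwb⟩) (hb t ht)
  exact lt_irrefl _ this

/-- Strict antitonicity on a closed interval from monotonicity + strict concavity + continuity. -/
lemma strictAntiOn_closed {f : ℝ → EReal} {a b : ℝ} (hab : a < b)
    (hanti : AntitoneOn f (Ioo a b))
    (hbot : ∀ t ∈ Ioo a b, f t ≠ ⊥) (htop : ∀ t, f t ≠ ⊤)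
    (hconc : StrictConcaveOn ℝ (Ioo a b) (fun t => (f t).toReal))
    (hcont : ContinuousOn f (Icc a b)) :
    ∀ u ∈ Icc a b, ∀ v ∈ Icc a b, u < v → f v < f u := by
  have hopen : ∀ c ∈ Ioo a b, ∀ d ∈ Ioo a b, c < d → f d < f c := by
    intro c hc d hd hcd
    rcases lt_or_eq_of_le (hanti hc hd hcd.le) with h | h
    · exact h
    · exfalso
      have hm : (1/2 : ℝ) • c + (1/2 : ℝ) • d ∈ Ioo a b := by
        simp only [smul_eq_mul]
        constructor
        · nlinarith [hc.1, hd.1]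
        · nlinarith [hc.2, hd.2]
      have hmid := hconc.2 hc hd (ne_of_lt hcd) (by norm_num : (0:ℝ) < 1/2)
        (by norm_num : (0:ℝ) < 1/2) (by norm_num)
      have hle : f ((1/2 : ℝ) • c + (1/2 : ℝ) • d) ≤ f c := by
        apply hanti hc hm
        have : c < (1/2 : ℝ) • c + (1/2 : ℝ) • d := by
          simp only [smul_eq_mul]; linarith
        exact this.le
      have hle' : (f ((1/2 : ℝ) • c + (1/2 : ℝ) • d)).toReal ≤ (f c).toReal :=
        EReal.toReal_le_toReal hle (hbot _ hm) (htop _)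
      simp only [smul_eq_mul] at hle'
      simp only [smul_eq_mul, h] at hmid
      linarith
  have hleft : ∀ c ∈ Ioo a b, f c ≤ f a := by
    intro c hc
    have htend : Filter.Tendsto f (nhdsWithin a (Ioo a b)) (nhds (f a)) :=
      ((hcont a (left_mem_Icc.2 hab.le)).mono Ioo_subset_Icc_self)
    rw [nhdsWithin_Ioo_eq_nhdsGT hab] at htend
    have hev : ∀ᶠ z in nhdsWithin a (Ioi a), f c ≤ f z := by
      filter_upwards [Ioo_mem_nhdsGT_of_mem (left_mem_Ico.2 hc.1)] with z hz
      exact hanti ⟨hz.1, hz.2.trans hc.2⟩ hc hz.2.le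
    exact ge_of_tendsto htend hev
  have hright : ∀ c ∈ Ioo a b, f b ≤ f c := by
    intro c hc
    have htend : Filter.Tendsto f (nhdsWithin b (Ioo a b)) (nhds (f b)) :=
      ((hcont b (right_mem_Icc.2 hab.le)).mono Ioo_subset_Icc_self)
    rw [nhdsWithin_Ioo_eq_nhdsLT hab] at htend
    have hev : ∀ᶠ z in nhdsWithin b (Iio b), f z ≤ f c := by
      filter_upwards [Ioo_mem_nhdsLT_of_mem (right_mem_Ioc.2 hc.2)] with z hz
      exact hanti hc ⟨hc.1.trans hz.1, hz.2⟩ hz.1.le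
    exact le_of_tendsto htend hev
  intro u hu v hv huv
  obtain ⟨c, hc⟩ : (Ioo u v).Nonempty := nonempty_Ioo.2 huv
  obtain ⟨d, hd⟩ : (Ioo c v).Nonempty := nonempty_Ioo.2 hc.2
  have hcmem : c ∈ Ioo a b := ⟨lt_of_le_of_lt hu.1 hc.1, lt_of_lt_of_le hc.2 hv.2⟩
  have hdmem : d ∈ Ioo a b := ⟨lt_of_le_of_lt hu.1 (hc.1.trans hd.1), lt_of_lt_of_le hd.2 hv.2⟩
  have h1 : f c ≤ f u := by
    rcases eq_or_lt_of_le hu.1 with h | h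
    · subst h; exact hleft c hcmem
    · exact (hopen u ⟨h, lt_of_lt_of_le (hc.1.trans hc.2) hv.2⟩ c hcmem hc.1).le
  have h2 : f v ≤ f d := by
    rcases eq_or_lt_of_le hv.2 with h | h
    · subst h; exact hright d hdmem
    · exact (hopen d hdmem v ⟨lt_of_le_of_lt hu.1 (hc.1.trans hc.2), h⟩ hd.2).le
  exact lt_of_le_of_lt h2 (lt_of_lt_of_le (hopen c hcmem d hdmem hd.1) h1)

/-- Strict monotonicity on `Icc 0 1` from monotonicity + strict concavity + continuity,
obtained by reflecting `strictAntiOn_closed`. -/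
lemma strictMonoOn_closed {f : ℝ → EReal}
    (hmono : MonotoneOn f (Ioo (0:ℝ) 1))
    (hbot : ∀ t ∈ Ioo (0:ℝ) 1, f t ≠ ⊥) (htop : ∀ t, f t ≠ ⊤)
    (hconc : StrictConcaveOn ℝ (Ioo (0:ℝ) 1) (fun t => (f t).toReal))
    (hcont : ContinuousOn f (Icc (0:ℝ) 1)) :
    ∀ u ∈ Icc (0:ℝ) 1, ∀ v ∈ Icc (0:ℝ) 1, u < v → f u < f v := by
  set g : ℝ → EReal := fun t => f (-t) with hg
  have hmapIoo : ∀ t ∈ Ioo (-1:ℝ) 0, -t ∈ Ioo (0:ℝ) 1 := by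
    intro t ht; exact ⟨by linarith [ht.2], by linarith [ht.1]⟩
  have hanti : AntitoneOn g (Ioo (-1:ℝ) 0) := by
    intro s hs t ht hst
    exact hmono (hmapIoo t ht) (hmapIoo s hs) (by linarith)
  have hgbot : ∀ t ∈ Ioo (-1:ℝ) 0, g t ≠ ⊥ := fun t ht => hbot _ (hmapIoo t ht)
  have hgtop : ∀ t, g t ≠ ⊤ := fun t => htop _
  have hgconc : StrictConcaveOn ℝ (Ioo (-1:ℝ) 0) (fun t => (g t).toReal) := by
    constructor
    · exact convex_Ioo _ _
    · intro p hp q hq hpq wa wb hwa hwb hab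
      have h1 := hconc.2 (hmapIoo p hp) (hmapIoo q hq)
        (fun h => hpq (by linarith [neg_injective h])) hwa hwb hab
      have h2 : wa • (-p) + wb • (-q) = -(wa • p + wb • q) := by
        simp only [smul_eq_mul]; ring
      rw [h2] at h1
      exact h1
  have hgcont : ContinuousOn g (Icc (-1:ℝ) 0) := by
    apply hcont.comp continuous_neg.continuousOn
    intro t ht
    simp only [mem_Icc] at ht ⊢
    constructor <;> linarith [ht.1, ht.2]
  intro u hu v hv huv
  have := strictAntiOn_closed (by norm_num : (-1:ℝ) < 0) hanti hgbot hgtop hgconc hgcont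
    (-v) ⟨by linarith [hv.2], by linarith [hv.1]⟩
    (-u) ⟨by linarith [hu.2], by linarith [hu.1]⟩ (by linarith)
  simpa [hg] using this

lemma ereal_sum_ne_top {ι : Type*} (A : Finset ι) (f : ι → EReal) (h : ∀ i ∈ A, f i ≠ ⊤) :
    ∑ i ∈ A, f i ≠ ⊤ := by
  classical
  induction A using Finset.induction_on with
  | empty => simp
  | @insert s t hnotmem ih =>
    rw [Finset.sum_insert hnotmem]
    exact (EReal.add_lt_top (h s (Finset.mem_insert_self s t))
      (ih (fun i hi => h i (Finset.mem_insert_of_mem hi)))).ne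

lemma ereal_sum_ne_bot {ι : Type*} (A : Finset ι) (f : ι → EReal) (h : ∀ i ∈ A, f i ≠ ⊥) :
    ∑ i ∈ A, f i ≠ ⊥ := by
  classical
  induction A using Finset.induction_on with
  | empty => simp
  | @insert s t hnotmem ih =>
    rw [Finset.sum_insert hnotmem, ne_eq, EReal.add_eq_bot_iff]
    push_neg
    exact ⟨h s (Finset.mem_insert_self s t), ih fun i hi => h i (Finset.mem_insert_of_mem hi)⟩

lemma ereal_sum_eq_bot_of_mem {ι : Type*} (A : Finset ι) (f : ι → EReal) {i : ι} (hi : i ∈ A)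
    (h : f i = ⊥) : ∑ j ∈ A, f j = ⊥ := by
  classical
  rw [← Finset.add_sum_erase A f hi, h, EReal.bot_add]

lemma ereal_coe_mul_lt {c : ℝ} (hc : 0 < c) {u v : EReal} (h : u < v) :
    (c : EReal) * u < (c : EReal) * v := by
  induction u with
  | bot =>
    rw [EReal.coe_mul_bot_of_pos hc]
    induction v with
    | bot => exact absurd h (lt_irrefl _)
    | coe r => rw [← EReal.coe_mul]; exact bot_lt_iff_ne_bot.2 (EReal.coe_ne_bot _)
    | top => rw [EReal.coe_mul_top_of_pos hc]; exact bot_lt_top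
  | coe r =>
    induction v with
    | bot => exact absurd h (by simp)
    | coe s =>
      rw [← EReal.coe_mul, ← EReal.coe_mul, EReal.coe_lt_coe_iff]
      exact mul_lt_mul_of_pos_left (EReal.coe_lt_coe_iff.1 h) hc
    | top =>
      rw [EReal.coe_mul_top_of_pos hc, ← EReal.coe_mul]
      exact lt_top_iff_ne_top.2 (EReal.coe_ne_top _)
  | top => exact absurd h (by simp)

lemma ereal_coe_mul_ne_top {c : ℝ} (hc : 0 < c) {u : EReal} (hu : u ≠ ⊤) :
    (c : EReal) * u ≠ ⊤ := by
  induction u with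
  | bot => rw [EReal.coe_mul_bot_of_pos hc]; exact bot_ne_top
  | coe r => rw [← EReal.coe_mul]; exact EReal.coe_ne_top _
  | top => exact absurd rfl hu

lemma ereal_coe_mul_ne_bot {c : ℝ} (hc : 0 < c) {u : EReal} (hu : u ≠ ⊥) :
    (c : EReal) * u ≠ ⊥ := by
  induction u with
  | bot => exact absurd rfl hu
  | coe r => rw [← EReal.coe_mul]; exact EReal.coe_ne_bot _
  | top => rw [EReal.coe_mul_top_of_pos hc]; exact top_ne_bot

lemma ereal_const_mul_continuous {c : ℝ} (hc : c ≠ 0) :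
    Continuous fun z : EReal => (c : EReal) * z := by
  rw [continuous_iff_continuousAt]
  intro z
  have h := EReal.continuousAt_mul (p := ((c : EReal), z))
    (Or.inl (by simpa using hc)) (Or.inl (by simpa using hc))
    (Or.inl (EReal.coe_ne_bot _)) (Or.inl (EReal.coe_ne_top _))
  exact h.comp ((continuous_const.prodMk continuous_id).continuousAt)

lemma ereal_contOn_sum {ι : Type*} (A : Finset ι) {s : Set ℝ} (G : ι → ℝ → EReal)
    (hG : ∀ i ∈ A, ContinuousOn (G i) s) (hT : ∀ i ∈ A, ∀ t, G i t ≠ ⊤) :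
    ContinuousOn (fun t => ∑ i ∈ A, G i t) s := by
  classical
  induction A using Finset.induction_on with
  | empty => simpa using continuousOn_const
  | @insert a A' hnot ih =>
    simp only [Finset.sum_insert hnot]
    intro z hz
    have h1 : ContinuousWithinAt (G a) s z := hG a (Finset.mem_insert_self a A') z hz
    have h2 : ContinuousWithinAt (fun t => ∑ i ∈ A', G i t) s z :=
      ih (fun i hi => hG i (Finset.mem_insert_of_mem hi))
        (fun i hi => hT i (Finset.mem_insert_of_mem hi)) z hz
    have hadd : ContinuousAt (fun p : EReal × EReal => p.1 + p.2)
        (G a z, ∑ i ∈ A', G i z) :=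
      EReal.continuousAt_add (Or.inl (hT a (Finset.mem_insert_self a A') z))
        (Or.inr (ereal_sum_ne_top A' _ (fun i hi => hT i (Finset.mem_insert_of_mem hi) z)))
    exact ContinuousAt.comp_continuousWithinAt (f := fun t => (G a t, ∑ i ∈ A', G i t)) hadd (h1.prodMk h2)

end Helpers

section SumTransLemmas

lemma sumTrans_usc (n : ℕ) (ν : Fin n → ℝ) (hν : ∀ i, 0 < ν i) (K J : ℝ → EReal)
    (hKtop : ∀ t, K t ≠ ⊤) (hJtop : ∀ t, J t ≠ ⊤)
    (hJusc : UpperSemicontinuousOn J (Icc (0:ℝ) 1))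
    {I : Set ℝ} (hKI : ContinuousOn K I) (x : Fin n → ℝ) {s : Set ℝ}
    (hs : s ⊆ Icc (0:ℝ) 1) (hmap : ∀ j, ∀ t ∈ s, t - x j ∈ I) :
    UpperSemicontinuousOn (sumTrans n ν K J x) s := by
  have hGc : ContinuousOn (fun t => ∑ i, (ν i : EReal) * K (t - x i)) s := by
    apply ereal_contOn_sum
    · intro i _
      have h1 : ContinuousOn (fun t => K (t - x i)) s :=
        hKI.comp ((continuous_sub_right (x i)).continuousOn) (fun t ht => hmap i t ht)
      exact (ereal_const_mul_continuous (hν i).ne').comp_continuousOn h1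
    · intro i _ t
      exact ereal_coe_mul_ne_top (hν i) (hKtop _)
  have hGtop : ∀ t, (∑ i, (ν i : EReal) * K (t - x i)) ≠ ⊤ := fun t =>
    ereal_sum_ne_top _ _ fun i _ => ereal_coe_mul_ne_top (hν i) (hKtop _)
  exact UpperSemicontinuousOn.add' (hJusc.mono hs) hGc.upperSemicontinuousOn
    (fun t ht => EReal.continuousAt_add (Or.inl (hJtop t)) (Or.inr (hGtop t)))

lemma sumTrans_lt (n : ℕ) (ν : Fin n → ℝ) (hν : ∀ i, 0 < ν i) (K J : ℝ → EReal)
    (hKtop : ∀ u, K u ≠ ⊤) (hJtop : ∀ u, J u ≠ ⊤) (x y : Fin n → ℝ) (t : ℝ)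
    (hcmp : ∀ j, K (t - x j) ≤ K (t - y j))
    (i : Fin n) (hstrict : K (t - x i) < K (t - y i))
    (hbot : sumTrans n ν K J x t ≠ ⊥) :
    sumTrans n ν K J x t < sumTrans n ν K J y t := by
  classical
  unfold sumTrans at hbot ⊢
  have hJbot : J t ≠ ⊥ := by
    intro h
    rw [h, EReal.bot_add] at hbot
    exact hbot rfl
  have hSbot : (∑ j, (ν j : EReal) * K (t - x j)) ≠ ⊥ := by
    intro h
    rw [h, EReal.add_bot] at hbot
    exact hbot rfl
  have hterm_bot : ∀ j, (ν j : EReal) * K (t - x j) ≠ ⊥ := by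
    intro j h
    exact hSbot (ereal_sum_eq_bot_of_mem _ _ (Finset.mem_univ j) h)
  have hSlt : (∑ j, (ν j : EReal) * K (t - x j)) < ∑ j, (ν j : EReal) * K (t - y j) := by
    rw [← Finset.add_sum_erase _ _ (Finset.mem_univ i),
      ← Finset.add_sum_erase _ (fun j => (ν j : EReal) * K (t - y j)) (Finset.mem_univ i)]
    apply EReal.add_lt_add_of_lt_of_le
    · exact ereal_coe_mul_lt (hν i) hstrict
    · exact Finset.sum_le_sum fun j _ =>
        mul_le_mul_of_nonneg_left (hcmp j) (by exact_mod_cast (hν j).le)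
    · exact ereal_sum_ne_bot _ _ fun j _ => hterm_bot j
    · exact ereal_sum_ne_top _ _ fun j _ => ereal_coe_mul_ne_top (hν j) (hKtop _)
  obtain ⟨r, hr⟩ : ∃ r : ℝ, J t = (r : EReal) :=
    ⟨(J t).toReal, (EReal.coe_toReal (hJtop t) hJbot).symm⟩
  rw [hr]
  exact EReal.add_lt_add_left_coe hSlt r

end SumTransLemmas


/-- Lemma (comparable node systems): if `x ≤ y` coordinatewise and `x ≠ y`, then
`m₀(x) < m₀(y)` and `mₙ(x) > mₙ(y)`; in particular intertwining of maxima holds. -/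
theorem comparable_intertwining (n : ℕ) (ν : Fin n → ℝ) (hν : ∀ i, 0 < ν i)
    (K J : ℝ → EReal) (hK : KernelFun K) (hSC : KStrictConcave K) (hM : KMonotone K)
    (hJ : NFieldFun n J) (hJusc : UpperSemicontinuousOn J (Icc (0:ℝ) 1))
    (x y : Fin n → ℝ) (hx : closedSimplex n x) (hy : closedSimplex n y)
    (hxr : regularNodes n ν K J x) (hyr : regularNodes n ν K J y)
    (hle : ∀ i, x i ≤ y i) (hne : x ≠ y) :
    intMax n ν K J x 0 < intMax n ν K J y 0 ∧
      intMax n ν K J y (Fin.last n) < intMax n ν K J x (Fin.last n) := by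
  obtain ⟨i0, hi0⟩ := Function.ne_iff.1 hne
  cases n with
  | zero => exact i0.elim0
  | succ m =>
    have hstrict0 : x i0 < y i0 := (hle i0).lt_of_ne hi0
    have hKtop : ∀ t, K t ≠ ⊤ := hK.1
    have hKbot := hK.2.1
    have hJtop : ∀ t, J t ≠ ⊤ := hJ.1
    have hAnti : ∀ u ∈ Icc (-1:ℝ) 0, ∀ v ∈ Icc (-1:ℝ) 0, u < v → K v < K u :=
      strictAntiOn_closed (by norm_num) hM.1 (fun t ht => hKbot t (Or.inl ht)) hKtop
        hSC.1 hK.2.2.2.2.1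
    have hMono : ∀ u ∈ Icc (0:ℝ) 1, ∀ v ∈ Icc (0:ℝ) 1, u < v → K u < K v :=
      strictMonoOn_closed hM.2 (fun t ht => hKbot t (Or.inr ht)) hKtop hSC.2 hK.2.2.2.2.2
    -- endpoint computations
    have he1x : extNodes (m+1) x ((0 : Fin (m+2)).castSucc) = 0 := by simp [extNodes]
    have he1y : extNodes (m+1) y ((0 : Fin (m+2)).castSucc) = 0 := by simp [extNodes]
    have hcast0 : (0 : Fin (m+2)) = Fin.castSucc (0 : Fin (m+1)) := by ext; simp
    have he2x : extNodes (m+1) x ((0 : Fin (m+2)).succ) = x 0 := by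
      unfold extNodes; rw [Fin.cons_succ, hcast0, Fin.snoc_castSucc]
    have he2y : extNodes (m+1) y ((0 : Fin (m+2)).succ) = y 0 := by
      unfold extNodes; rw [Fin.cons_succ, hcast0, Fin.snoc_castSucc]
    have hcastL : (Fin.last (m+1)).castSucc = ((Fin.last m).castSucc).succ := by ext; simp
    have he3x : extNodes (m+1) x ((Fin.last (m+1)).castSucc) = x (Fin.last m) := by
      unfold extNodes; rw [hcastL, Fin.cons_succ, Fin.snoc_castSucc]
    have he3y : extNodes (m+1) y ((Fin.last (m+1)).castSucc) = y (Fin.last m) := by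
      unfold extNodes; rw [hcastL, Fin.cons_succ, Fin.snoc_castSucc]
    have he4x : extNodes (m+1) x ((Fin.last (m+1)).succ) = 1 := by
      unfold extNodes; rw [Fin.cons_succ, Fin.snoc_last]
    have he4y : extNodes (m+1) y ((Fin.last (m+1)).succ) = 1 := by
      unfold extNodes; rw [Fin.cons_succ, Fin.snoc_last]
    constructor
    · -- first interval
      have hX0 := hx.1 0
      have hY0 := hy.1 0
      have hXY0 : x 0 ≤ y 0 := hle 0
      have hmapx : ∀ j : Fin (m+1), ∀ t ∈ Icc (0:ℝ) (x 0), t - x j ∈ Icc (-1:ℝ) 0 := by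
        intro j t ht
        simp only [mem_Icc] at ht ⊢
        have h1 : x 0 ≤ x j := hx.2 (Fin.zero_le j)
        have h2 := (hx.1 j).2
        constructor <;> linarith [ht.1, ht.2]
      have hmapy : ∀ j : Fin (m+1), ∀ t ∈ Icc (0:ℝ) (x 0), t - y j ∈ Icc (-1:ℝ) 0 := by
        intro j t ht
        simp only [mem_Icc] at ht ⊢
        have h1 : x 0 ≤ x j := hx.2 (Fin.zero_le j)
        have h2 := (hy.1 j).2
        have h3 := hle j
        constructor <;> linarith [ht.1, ht.2]
      have huscx : UpperSemicontinuousOn (sumTrans (m+1) ν K J x) (Icc (0:ℝ) (x 0)) :=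
        sumTrans_usc (m+1) ν hν K J hKtop hJtop hJusc hK.2.2.2.2.1 x
          (Icc_subset_Icc le_rfl hX0.2) hmapx
      obtain ⟨t₀, ht₀, hmax⟩ := usc_exists_max isCompact_Icc (nonempty_Icc.2 hX0.1) huscx
      have hm0x : intMax (m+1) ν K J x 0 = sumTrans (m+1) ν K J x t₀ := by
        unfold intMax
        rw [he1x, he2x]
        have hg : IsGreatest (sumTrans (m+1) ν K J x '' Icc (0:ℝ) (x 0))
            (sumTrans (m+1) ν K J x t₀) :=
          ⟨mem_image_of_mem _ ht₀, by rintro _ ⟨z, hz, rfl⟩; exact hmax z hz⟩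
        exact hg.csSup_eq
      have hFxbot : sumTrans (m+1) ν K J x t₀ ≠ ⊥ := hm0x ▸ hxr 0
      have hcmp : ∀ j, K (t₀ - x j) ≤ K (t₀ - y j) := by
        intro j
        have hxy : t₀ - y j ≤ t₀ - x j := by linarith [hle j]
        rcases eq_or_lt_of_le hxy with h | h
        · rw [← h]
        · exact (hAnti _ (hmapy j t₀ ht₀) _ (hmapx j t₀ ht₀) h).le
      have hstrictK : K (t₀ - x i0) < K (t₀ - y i0) :=
        hAnti _ (hmapy i0 t₀ ht₀) _ (hmapx i0 t₀ ht₀) (by linarith)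
      have hlt1 := sumTrans_lt (m+1) ν hν K J hKtop hJtop x y t₀ hcmp i0 hstrictK hFxbot
      have hFyle : sumTrans (m+1) ν K J y t₀ ≤ intMax (m+1) ν K J y 0 := by
        unfold intMax
        rw [he1y, he2y]
        exact le_sSup (mem_image_of_mem _ ⟨ht₀.1, ht₀.2.trans hXY0⟩)
      calc intMax (m+1) ν K J x 0 = sumTrans (m+1) ν K J x t₀ := hm0x
        _ < sumTrans (m+1) ν K J y t₀ := hlt1
        _ ≤ intMax (m+1) ν K J y 0 := hFyle
    · -- last interval
      have hY1 := hy.1 (Fin.last m)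
      have hX1 := hx.1 (Fin.last m)
      have hXY1 : x (Fin.last m) ≤ y (Fin.last m) := hle (Fin.last m)
      have hmapy' : ∀ j : Fin (m+1), ∀ t ∈ Icc (y (Fin.last m)) 1, t - y j ∈ Icc (0:ℝ) 1 := by
        intro j t ht
        simp only [mem_Icc] at ht ⊢
        have h1 : y j ≤ y (Fin.last m) := hy.2 (Fin.le_last j)
        have h2 := (hy.1 j).1
        constructor <;> linarith [ht.1, ht.2]
      have hmapx' : ∀ j : Fin (m+1), ∀ t ∈ Icc (y (Fin.last m)) 1, t - x j ∈ Icc (0:ℝ) 1 := by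
        intro j t ht
        simp only [mem_Icc] at ht ⊢
        have h1 : x j ≤ y j := hle j
        have h2 : y j ≤ y (Fin.last m) := hy.2 (Fin.le_last j)
        have h3 := (hx.1 j).1
        constructor <;> linarith [ht.1, ht.2]
      have huscy : UpperSemicontinuousOn (sumTrans (m+1) ν K J y) (Icc (y (Fin.last m)) 1) :=
        sumTrans_usc (m+1) ν hν K J hKtop hJtop hJusc hK.2.2.2.2.2 y
          (Icc_subset_Icc hY1.1 le_rfl) hmapy'
      obtain ⟨t₁, ht₁, hmax⟩ := usc_exists_max isCompact_Icc (nonempty_Icc.2 hY1.2) huscy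
      have hmLy : intMax (m+1) ν K J y (Fin.last (m+1)) = sumTrans (m+1) ν K J y t₁ := by
        unfold intMax
        rw [he3y, he4y]
        have hg : IsGreatest (sumTrans (m+1) ν K J y '' Icc (y (Fin.last m)) 1)
            (sumTrans (m+1) ν K J y t₁) :=
          ⟨mem_image_of_mem _ ht₁, by rintro _ ⟨z, hz, rfl⟩; exact hmax z hz⟩
        exact hg.csSup_eq
      have hFybot : sumTrans (m+1) ν K J y t₁ ≠ ⊥ := hmLy ▸ hyr (Fin.last (m+1))
      have hcmp' : ∀ j, K (t₁ - y j) ≤ K (t₁ - x j) := by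
        intro j
        have hxy : t₁ - y j ≤ t₁ - x j := by linarith [hle j]
        rcases eq_or_lt_of_le hxy with h | h
        · rw [h]
        · exact (hMono _ (hmapy' j t₁ ht₁) _ (hmapx' j t₁ ht₁) h).le
      have hstrictK' : K (t₁ - y i0) < K (t₁ - x i0) :=
        hMono _ (hmapy' i0 t₁ ht₁) _ (hmapx' i0 t₁ ht₁) (by linarith)
      have hlt2 := sumTrans_lt (m+1) ν hν K J hKtop hJtop y x t₁ hcmp' i0 hstrictK' hFybot
      have hFxle : sumTrans (m+1) ν K J x t₁ ≤ intMax (m+1) ν K J x (Fin.last (m+1)) := by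
        unfold intMax
        rw [he3x, he4x]
        exact le_sSup (mem_image_of_mem _ ⟨hXY1.trans ht₁.1, ht₁.2⟩)
      calc intMax (m+1) ν K J y (Fin.last (m+1)) = sumTrans (m+1) ν K J y t₁ := hmLy
        _ < sumTrans (m+1) ν K J x t₁ := hlt2
        _ ≤ intMax (m+1) ν K J x (Fin.last (m+1)) := hFxle
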